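/- Let p be a prime and G a finite group having a strongly p-embedded subgroup. Let (K_i)_{i ∈ I} be a finite family of normal subgroups of G with ⋂_{i ∈ I} K_i = 1, and let J = {i ∈ I : p does not divide |K_i|}. Assume in addition that there exists a p-subgroup T ≤ G such that the normalizer N_G(T) is strongly p-embedded in G (this hypothesis holds, for example, whenever p² does not divide |G|). Then there exists j ∈ J such that the quotient G/K_j has a strongly p-embedded subgroup. -/

import Mathlib

/-- A proper subgroup `H < G` is strongly `p`-embedded if `p` divides `|H|` and, for every
`g ∈ G` with `g ∉ H`, `p` does not divide `|H ∩ gHg⁻¹|`. -/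
def IsStronglyPEmbedded (p : ℕ) {G : Type*} [Group G] (H : Subgroup G) : Prop :=
  H ≠ ⊤ ∧ (p ∣ Nat.card H) ∧
    ∀ g : G, g ∉ H →
      ¬ (p ∣ Nat.card ↥(H ⊓ Subgroup.map (MulAut.conj g).toMonoidHom H))

open Subgroup
open scoped Pointwise

namespace StmtAux

variable {G : Type*} [Group G] {p : ℕ}

/-- Conjugate of a subgroup. -/
abbrev cj (g : G) (H : Subgroup G) : Subgroup G := H.map (MulAut.conj g).toMonoidHom

lemma mem_cj {g x : G} {H : Subgroup G} : x ∈ cj g H ↔ g⁻¹ * x * g ∈ H := by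
  rw [cj, Subgroup.mem_map_equiv]
  simp

lemma cj_cj (a b : G) (H : Subgroup G) : cj a (cj b H) = cj (a * b) H := by
  ext x
  simp only [mem_cj, mul_inv_rev, mul_assoc]

lemma cj_one (H : Subgroup G) : cj 1 H = H := by
  ext x; simp [mem_cj]

lemma card_cj (g : G) (H : Subgroup G) : Nat.card (cj g H) = Nat.card H :=
  (Nat.card_congr (Subgroup.equivMapOfInjective H _ (MulAut.conj g).injective).toEquiv).symm

lemma cj_bot_iff {g : G} {H : Subgroup G} : cj g H = ⊥ ↔ H = ⊥ := by
  constructor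
  · intro h
    have := congrArg (cj g⁻¹) h
    rw [cj_cj, inv_mul_cancel, cj_one] at this
    simpa using this
  · rintro rfl; exact Subgroup.map_bot _

lemma cj_normalizer (g : G) (H : Subgroup G) : (Subgroup.normalizer ((cj g H) : Set G)) = cj g (Subgroup.normalizer (H : Set G)) :=
  (Subgroup.map_equiv_normalizer_eq H (MulAut.conj g)).symm

lemma cj_inf (g : G) (A B : Subgroup G) : cj g (A ⊓ B) = cj g A ⊓ cj g B :=
  Subgroup.map_inf A B _ (MulAut.conj g).injective

lemma cj_sup (g : G) (A B : Subgroup G) : cj g (A ⊔ B) = cj g A ⊔ cj g B :=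
  Subgroup.map_sup A B _

lemma cj_top (g : G) : cj g (⊤ : Subgroup G) = ⊤ := by
  ext x
  simp only [mem_cj, Subgroup.mem_top]


lemma cj_of_normal {g : G} {K : Subgroup G} (hK : K.Normal) : cj g K = K := by
  ext x
  simp only [mem_cj]
  constructor
  · intro h
    have := hK.conj_mem _ h g
    simpa [mul_assoc] using this
  · intro h
    have := hK.conj_mem _ h g⁻¹
    simpa [mul_assoc] using this

lemma cj_mono {A B : Subgroup G} (g : G) (h : A ≤ B) : cj g A ≤ cj g B :=
  Subgroup.map_mono h

lemma cj_eq_top_iff {g : G} {H : Subgroup G} : cj g H = ⊤ ↔ H = ⊤ := by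
  constructor
  · intro h
    have := congrArg (cj g⁻¹) h
    rwa [cj_cj, inv_mul_cancel, cj_one, cj_top] at this
  · rintro rfl; exact cj_top g

lemma mem_normalizer_of_cj_eq {g : G} {A : Subgroup G} (h : cj g A = A) :
    g ∈ (Subgroup.normalizer (A : Set G)) := by
  rw [Subgroup.mem_normalizer_iff]
  intro x
  constructor
  · intro hx
    have : g * x * g⁻¹ ∈ cj g A := mem_cj.mpr (by simpa [mul_assoc] using hx)
    rwa [h] at this
  · intro hx
    have : g * x * g⁻¹ ∈ cj g A := h.symm ▸ hx
    have := mem_cj.mp this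
    simpa [mul_assoc] using this

lemma cj_eq_of_mem_normalizer {g : G} {A : Subgroup G} (h : g ∈ (Subgroup.normalizer (A : Set G))) :
    cj g A = A := by
  ext x
  rw [mem_cj, Subgroup.mem_normalizer_iff] at *
  constructor
  · intro hx
    have := (h (g⁻¹ * x * g)).mp hx
    simpa [mul_assoc] using this
  · intro hx
    exact (h (g⁻¹ * x * g)).mpr (by simpa [mul_assoc] using hx)


lemma IsStronglyPEmbedded.not_dvd {H : Subgroup G} (hH : IsStronglyPEmbedded p H) {g : G}
    (hg : g ∉ H) : ¬ p ∣ Nat.card ↥(H ⊓ cj g H) := hH.2.2 g hg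

/-- Conjugates of strongly p-embedded subgroups are strongly p-embedded. -/
lemma strongly_conj {H : Subgroup G} (hH : IsStronglyPEmbedded p H) (a : G) :
    IsStronglyPEmbedded p (cj a H) := by
  refine ⟨fun h => hH.1 (cj_eq_top_iff.mp h), by rw [card_cj]; exact hH.2.1, ?_⟩
  intro g hg
  have hmem : a⁻¹ * g * a ∉ H := by
    intro h
    exact hg (mem_cj.mpr (by simpa [mul_assoc] using h))
  have hcard : cj a H ⊓ cj g (cj a H) = cj a (H ⊓ cj (a⁻¹ * g * a) H) := by
    rw [cj_inf, cj_cj, cj_cj]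
    congr 2
    group
  rw [show (Subgroup.map (MulAut.conj g).toMonoidHom (cj a H)) = cj g (cj a H) from rfl, hcard,
    card_cj]
  exact hH.2.2 _ hmem

/-- A nontrivial finite p-group has cardinality divisible by p. -/
lemma pdvd_card {Q : Subgroup G} [Finite G] (hp : p.Prime) (hQ : IsPGroup p Q) (hbot : Q ≠ ⊥) :
    p ∣ Nat.card Q := by
  haveI : Fact p.Prime := ⟨hp⟩
  obtain ⟨n, hn⟩ := IsPGroup.iff_card.mp hQ
  rcases Nat.eq_zero_or_pos n with rfl | hpos
  · simp only [pow_zero] at hn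
    exact absurd (Subgroup.card_eq_one.mp hn) hbot
  · rw [hn]
    exact dvd_pow_self p hpos.ne'

/-- Key uniqueness: a nontrivial p-subgroup lies in at most one conjugate of a strongly
p-embedded subgroup. -/
lemma key {H Q : Subgroup G} [Finite G] (hp : p.Prime) (hH : IsStronglyPEmbedded p H)
    (hQ : IsPGroup p Q) (hbot : Q ≠ ⊥) {a b : G} (ha : Q ≤ cj a H) (hb : Q ≤ cj b H) :
    b⁻¹ * a ∈ H := by
  by_contra hmem
  have h1 : cj b⁻¹ Q ≤ H := by
    have := cj_mono b⁻¹ hb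
    rwa [cj_cj, inv_mul_cancel, cj_one] at this
  have h2 : cj b⁻¹ Q ≤ cj (b⁻¹ * a) H := by
    have := cj_mono b⁻¹ ha
    rwa [cj_cj] at this
  have hdvd : p ∣ Nat.card ↥(H ⊓ cj (b⁻¹ * a) H) := by
    refine dvd_trans ?_ (Subgroup.card_dvd_of_le (le_inf h1 h2))
    rw [card_cj]
    exact pdvd_card hp hQ hbot
  exact hH.2.2 _ hmem hdvd

/-- If Q is a nontrivial p-subgroup of a strongly p-embedded subgroup H then N_G(Q) ≤ H. -/
lemma normalizer_le {H Q : Subgroup G} [Finite G] (hp : p.Prime)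
    (hH : IsStronglyPEmbedded p H) (hQ : IsPGroup p Q) (hbot : Q ≠ ⊥) (hle : Q ≤ H) :
    (Subgroup.normalizer (Q : Set G)) ≤ H := by
  intro n hn
  have ha : Q ≤ cj n H := by
    have : cj n Q = Q := cj_eq_of_mem_normalizer hn
    rw [← this]
    exact cj_mono n hle
  have := key hp hH hQ hbot ha (by rw [cj_one]; exact hle)
  simpa using this


lemma eq_of_le_of_card_le {A B : Subgroup G} [Finite G] (h : A ≤ B)
    (hc : Nat.card B ≤ Nat.card A) : A = B := by
  have h1 : (A : Set G) ⊆ (B : Set G) := h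
  have h2 : (B : Set G).ncard ≤ (A : Set G).ncard := by
    rwa [← Nat.card_coe_set_eq, ← Nat.card_coe_set_eq]
  exact SetLike.coe_injective (Set.eq_of_subset_of_ncard_le h1 h2 (Set.toFinite _))

/-- In a finite p-group N, the normalizer of a subgroup of N (in G) together with
the growth: any p-subgroup N containing a nontrivial Q ≤ H sits in H. -/
lemma grow_aux {H : Subgroup G} [Finite G] (hp : p.Prime) (hH : IsStronglyPEmbedded p H)
    {N : Subgroup G} (hN : IsPGroup p N) :
    ∀ (k : ℕ) (Q : Subgroup G), Q ≤ N → Q ≤ H → Q ≠ ⊥ →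
      Nat.card N ≤ Nat.card Q + k → N ≤ H := by
  haveI : Fact p.Prime := ⟨hp⟩
  intro k
  induction k with
  | zero =>
    intro Q hQN hQH _ hcard
    have : Q = N := eq_of_le_of_card_le hQN (by simpa using hcard)
    exact this ▸ hQH
  | succ k ih =>
    intro Q hQN hQH hQbot hcard
    by_cases heq : Q = N
    · exact heq ▸ hQH
    -- Q < N; use normalizer growth inside the p-group N
    have hQltN : Q < N := lt_of_le_of_ne hQN heq
    have hpN : IsPGroup p ↥N := hN
    haveI : Finite ↥N := inferInstance
    have hnilp : Group.IsNilpotent ↥N := hpN.isNilpotent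
    have hNC : NormalizerCondition ↥N := normalizerCondition_of_isNilpotent (G := ↥N)
    set Q₀ : Subgroup ↥N := Q.subgroupOf N with hQ₀
    have hQ₀top : Q₀ < ⊤ := by
      rcases SetLike.exists_of_lt hQltN with ⟨x, hxN, hxQ⟩
      refine lt_of_le_of_ne le_top ?_
      intro htop
      have : (⟨x, hxN⟩ : ↥N) ∈ Q₀ := htop ▸ Subgroup.mem_top _
      exact hxQ (by simpa [hQ₀, Subgroup.mem_subgroupOf] using this)
    have hlt : Q₀ < (Subgroup.normalizer (Q₀ : Set ↥N)) := hNC Q₀ hQ₀top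
    set Q₂ : Subgroup G := ((Subgroup.normalizer (Q₀ : Set ↥N))).map N.subtype with hQ₂
    have hQmap : Q₀.map N.subtype = Q := by
      rw [hQ₀, Subgroup.subgroupOf_map_subtype, inf_eq_left.mpr hQN]
    have hQQ₂ : Q < Q₂ := by
      rw [← hQmap, hQ₂]
      refine lt_of_le_of_ne (Subgroup.map_mono hlt.le) ?_
      intro heq
      exact hlt.ne (Subgroup.map_injective N.subtype_injective heq)
    have hQ₂N : Q₂ ≤ N := Subgroup.map_subtype_le _
    -- Q₂ normalizes Q
    have hQ₂norm : Q₂ ≤ (Subgroup.normalizer (Q : Set G)) := by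
      rintro x hx
      rw [hQ₂] at hx
      obtain ⟨y, hy, rfl⟩ := hx
      rw [Subgroup.mem_normalizer_iff]
      intro h
      constructor
      · intro hh
        have hhN : h ∈ N := hQN hh
        have : (⟨h, hhN⟩ : ↥N) ∈ Q₀ := by simpa [hQ₀, Subgroup.mem_subgroupOf] using hh
        have := (Subgroup.mem_normalizer_iff.mp hy ⟨h, hhN⟩).mp this
        simpa [hQ₀, Subgroup.mem_subgroupOf] using this
      · intro hh
        have hconjN : (y : G) * h * (y : G)⁻¹ ∈ N := hQN hh
        have hhN : h ∈ N := by
          have := N.mul_mem (N.mul_mem (N.inv_mem y.2) hconjN) y.2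
          simpa [mul_assoc] using this
        have h2 : y * ⟨h, hhN⟩ * y⁻¹ ∈ Q₀ := by
          rw [Subgroup.mem_subgroupOf]
          simpa using hh
        have := (Subgroup.mem_normalizer_iff.mp hy ⟨h, hhN⟩).mpr h2
        simpa [hQ₀, Subgroup.mem_subgroupOf] using this
    have hQ₂H : Q₂ ≤ H :=
      le_trans hQ₂norm (normalizer_le hp hH (hN.to_le hQN) hQbot hQH)
    have hQ₂bot : Q₂ ≠ ⊥ := by
      intro hb
      exact hQbot (le_bot_iff.mp (hb ▸ hQQ₂.le))
    have hcard₂ : Nat.card N ≤ Nat.card Q₂ + k := by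
      have : Nat.card Q < Nat.card Q₂ := by
        have hlt2 : (Q : Set G).ncard < (Q₂ : Set G).ncard :=
          Set.ncard_lt_ncard (SetLike.coe_ssubset_coe.mpr hQQ₂) (Set.toFinite _)
        rw [← Nat.card_coe_set_eq, ← Nat.card_coe_set_eq] at hlt2
        exact hlt2
      omega
    exact ih Q₂ hQ₂N hQ₂H hQ₂bot hcard₂


lemma grow {H T N : Subgroup G} [Finite G] (hp : p.Prime) (hH : IsStronglyPEmbedded p H)
    (hN : IsPGroup p N) (hTN : T ≤ N) (hTH : T ≤ H) (hTbot : T ≠ ⊥) : N ≤ H :=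
  grow_aux hp hH hN (Nat.card N) T hTN hTH hTbot (Nat.le_add_left _ _)

/-- K normalizes T ⊔ K. -/
lemma K_le_normalizer_sup (T K : Subgroup G) [hK : K.Normal] : K ≤ (Subgroup.normalizer ((T ⊔ K : Subgroup G) : Set G)) := by
  have key : ∀ k ∈ K, ∀ x ∈ T ⊔ K, k * x * k⁻¹ ∈ T ⊔ K := by
    intro k hk x hx
    have hx' : x ∈ (T : Set G) * (K : Set G) := by
      rw [← Subgroup.mul_normal T K]; exact hx
    obtain ⟨t, ht, c, hc, rfl⟩ := hx'
    have hmem : k * (t * c) * k⁻¹ ∈ (T : Set G) * (K : Set G) := by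
      rw [show k * (t * c) * k⁻¹ = t * ((t⁻¹ * k * t) * (c * k⁻¹)) by group]
      refine Set.mul_mem_mul ht ?_
      refine K.mul_mem ?_ (K.mul_mem hc (K.inv_mem hk))
      have := hK.conj_mem k hk t⁻¹
      simpa using this
    rw [← Subgroup.mul_normal T K] at hmem
    exact hmem
  intro k hk
  rw [Subgroup.mem_normalizer_iff]
  intro x
  constructor
  · intro hx
    exact key k hk x hx
  · intro hx
    have := key k⁻¹ (K.inv_mem hk) _ hx
    simpa [mul_assoc] using this
/-- H = N(T) normalizes T ⊔ K. -/
lemma H_le_normalizer_sup (T K : Subgroup G) [hK : K.Normal] :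
    (Subgroup.normalizer (T : Set G)) ≤ (Subgroup.normalizer ((T ⊔ K : Subgroup G) : Set G)) := by
  intro h hh
  apply mem_normalizer_of_cj_eq
  rw [cj_sup, cj_of_normal hK, cj_eq_of_mem_normalizer hh]

/-- If `p` divides `|K|` (K normal) then `T ⊔ K` is normal, provided `N_G(T)` is strongly
`p`-embedded. -/
lemma sup_normal_of_dvd [Finite G] (hp : p.Prime) {T K : Subgroup G} [hKn : K.Normal]
    (hT : IsPGroup p T) (hTbot : T ≠ ⊥) (hH : IsStronglyPEmbedded p (Subgroup.normalizer (T : Set G)))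
    (hdvd : p ∣ Nat.card K) : (T ⊔ K).Normal := by
  haveI : Fact p.Prime := ⟨hp⟩
  set H := (Subgroup.normalizer (T : Set G)) with hHdef
  -- A Sylow p-subgroup of G containing T; it lies in H
  obtain ⟨PT, hTPT⟩ := hT.exists_le_sylow
  have hPTH : (PT : Subgroup G) ≤ H := grow hp hH PT.2 hTPT Subgroup.le_normalizer hTbot
  -- A Sylow p-subgroup of K
  obtain ⟨P⟩ := (inferInstance : Nonempty (Sylow p ↥K))
  set R : Subgroup G := (P : Subgroup ↥K).map K.subtype with hRdef
  have hRp : IsPGroup p R := P.2.map K.subtype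
  have hRK : R ≤ K := Subgroup.map_subtype_le _
  have hRbot : R ≠ ⊥ := by
    intro hb
    have h1 : Nat.card (P : Subgroup ↥K) = 1 := by
      have := Nat.card_congr (Subgroup.equivMapOfInjective (P : Subgroup ↥K) K.subtype
        K.subtype_injective).toEquiv
      rw [← hRdef] at this
      rw [this, hb, Subgroup.card_bot]
    have h2 : ¬ p ∣ Nat.card ↥K := by
      have := P.card_eq_multiplicity
      rw [h1] at this
      have hzero : (Nat.card ↥K).factorization p = 0 := by
        by_contra hne
        have : 1 < p ^ (Nat.card ↥K).factorization p :=
          Nat.one_lt_pow hne hp.one_lt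
        omega
      rw [Nat.factorization_eq_zero_iff] at hzero
      rcases hzero with h | h | h
      · exact absurd hp h
      · exact h
      · exact absurd h (Nat.card_pos).ne'
    exact h2 hdvd
  -- R is contained in some Sylow subgroup of G, which is conjugate to PT
  obtain ⟨QS, hRQS⟩ := hRp.exists_le_sylow
  obtain ⟨c, hc⟩ := MulAction.exists_smul_eq G PT QS
  have hQS : (QS : Subgroup G) = cj c PT := by
    rw [← hc]
    rfl
  have hRH : R ≤ cj c H := le_trans hRQS (hQS ▸ cj_mono c hPTH)
  -- Frattini argument
  have hfrattini : (Subgroup.normalizer (R : Set G)) ⊔ K = ⊤ := Sylow.normalizer_sup_eq_top P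
  have hNR : (Subgroup.normalizer (R : Set G)) ≤ cj c H :=
    normalizer_le hp (strongly_conj hH c) hRp hRbot hRH
  have htop : cj c H ⊔ K = ⊤ := by
    rw [eq_top_iff, ← hfrattini]
    exact sup_le_sup_right hNR K
  have hHK : H ⊔ K = ⊤ := by
    have := congrArg (cj c⁻¹) htop
    rw [cj_sup, cj_cj, inv_mul_cancel, cj_one, cj_of_normal hKn, cj_top] at this
    exact this
  -- conclude normality
  rw [← Subgroup.normalizer_eq_top_iff, eq_top_iff, ← hHK]
  exact sup_le (H_le_normalizer_sup T K) (K_le_normalizer_sup T K)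


lemma map_subtype_top (A : Subgroup G) : (⊤ : Subgroup ↥A).map A.subtype = A := by
  ext x
  constructor
  · rintro ⟨y, -, rfl⟩
    exact y.2
  · intro hx
    exact ⟨⟨x, hx⟩, trivial, rfl⟩

/-- Lifting a `p`-element of the quotient normalizing the image of `T` to a `p`-element
of `N_G(T)`. -/
lemma lift_p_elem [Finite G] (hp : p.Prime) {T K : Subgroup G} [hKn : K.Normal]
    (hT : IsPGroup p T) (hTbot : T ≠ ⊥) (hH : IsStronglyPEmbedded p (Subgroup.normalizer (T : Set G)))
    (hK : ¬ p ∣ Nat.card K) {x : G ⧸ K} (hx : orderOf x = p)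
    (hxn : x ∈ (Subgroup.normalizer ((T.map (QuotientGroup.mk' K)) : Set (G ⧸ K)))) :
    ∃ s : G, s ∈ (Subgroup.normalizer (T : Set G)) ∧ QuotientGroup.mk' K s = x ∧ orderOf s = p := by
  haveI : Fact p.Prime := ⟨hp⟩
  set π := QuotientGroup.mk' K with hπdef
  have hπ : Function.Surjective π := QuotientGroup.mk'_surjective K
  set Tb := T.map π with hTbdef
  set Z := Subgroup.zpowers x with hZdef
  have hZp : IsPGroup p ↥Z := IsPGroup.of_card (by rw [Nat.card_zpowers, hx, pow_one])
  have hPbar : IsPGroup p ↥(Z ⊔ Tb) :=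
    IsPGroup.to_sup_of_normal_right' hZp (hT.map π) (Subgroup.zpowers_le.mpr hxn)
  set Pb := Z ⊔ Tb with hPbdef
  set Q₁ := Pb.comap π with hQ₁def
  have hKQ₁ : K ≤ Q₁ := by
    intro k hk
    have h1 : π k = 1 := (QuotientGroup.eq_one_iff k).mpr hk
    rw [hQ₁def, Subgroup.mem_comap, h1]
    exact Pb.one_mem
  have hTQ₁ : T ≤ Q₁ := fun t ht =>
    Subgroup.mem_comap.mpr ((le_sup_right : Tb ≤ Pb) (Subgroup.mem_map_of_mem π ht))
  have hTsub : IsPGroup p (T.subgroupOf Q₁) := hT.comap_of_injective Q₁.subtype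
    Q₁.subtype_injective
  obtain ⟨S, hS⟩ := hTsub.exists_le_sylow
  set S₀ := (S : Subgroup ↥Q₁).map Q₁.subtype with hS₀def
  have hS₀p : IsPGroup p S₀ := S.2.map _
  have hTS₀ : T ≤ S₀ := by
    have := Subgroup.map_mono (f := Q₁.subtype) hS
    rwa [Subgroup.subgroupOf_map_subtype, inf_eq_left.mpr hTQ₁] at this
  set B := K.subgroupOf Q₁ with hBdef
  set φ := π.comp Q₁.subtype with hφdef
  have hkerφ : φ.ker = B := by
    rw [hφdef, ← MonoidHom.comap_ker, QuotientGroup.ker_mk']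
    rfl
  have hrangeφ : φ.range = Pb := by
    rw [hφdef, MonoidHom.range_comp, Subgroup.range_subtype,
      Subgroup.map_comap_eq_self_of_surjective hπ]
  have hBindex : B.index = Nat.card Pb := by
    rw [Subgroup.index, ← hkerφ, ← hrangeφ]
    exact Nat.card_congr (QuotientGroup.quotientKerEquivRange φ).toEquiv
  obtain ⟨m, hm⟩ := IsPGroup.iff_card.mp hPbar
  have hSB : (S : Subgroup ↥Q₁) ⊔ B = ⊤ := by
    rw [← Subgroup.index_eq_one]
    have h1 : ((S : Subgroup ↥Q₁) ⊔ B).index ∣ B.index :=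
      Subgroup.index_dvd_of_le le_sup_right
    have h2 : ((S : Subgroup ↥Q₁) ⊔ B).index ∣ (S : Subgroup ↥Q₁).index :=
      Subgroup.index_dvd_of_le le_sup_left
    rw [hBindex, hm] at h1
    obtain ⟨j, hj, hjeq⟩ := (Nat.dvd_prime_pow hp).mp h1
    rcases Nat.eq_zero_or_pos j with rfl | hjpos
    · simpa using hjeq
    · exfalso
      apply S.not_dvd_index
      exact dvd_trans (hjeq ▸ dvd_pow_self p hjpos.ne') h2
  have hS₀K : S₀ ⊔ K = Q₁ := by
    have := congrArg (Subgroup.map Q₁.subtype) hSB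
    rwa [Subgroup.map_sup, hBdef, Subgroup.subgroupOf_map_subtype,
      inf_eq_left.mpr hKQ₁, map_subtype_top, ← hS₀def] at this
  have hπK : K.map π = ⊥ := by
    rw [Subgroup.map_eq_bot_iff, hπdef, QuotientGroup.ker_mk']
  have hπS₀ : S₀.map π = Pb := by
    have := congrArg (Subgroup.map π) hS₀K
    rwa [Subgroup.map_sup, hπK, sup_bot_eq, Subgroup.map_comap_eq_self_of_surjective hπ]
      at this
  have hxPb : x ∈ Pb := (le_sup_left : Z ≤ Pb) (Subgroup.mem_zpowers x)
  rw [← hπS₀] at hxPb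
  obtain ⟨s, hsS₀, hπs⟩ := hxPb
  have hS₀H : S₀ ≤ (Subgroup.normalizer (T : Set G)) := grow hp hH hS₀p hTS₀ Subgroup.le_normalizer hTbot
  -- now the order of s is exactly p
  have hspK : s ^ p ∈ K := by
    have h1 : π (s ^ p) = 1 := by rw [map_pow, hπs, ← hx, pow_orderOf_eq_one]
    exact (QuotientGroup.eq_one_iff (s ^ p)).mp h1
  have hsp1 : s ^ p = 1 := by
    obtain ⟨k, hk⟩ := hS₀p ⟨s, hsS₀⟩
    have hs1 : s ^ (p ^ k : ℕ) = 1 := by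
      have := congrArg (S₀.subtype) hk
      simpa using this
    have h2 : orderOf (s ^ p) ∣ p ^ k :=
      (orderOf_pow_dvd p).trans (orderOf_dvd_of_pow_eq_one hs1)
    obtain ⟨j, hjk, hj⟩ := (Nat.dvd_prime_pow hp).mp h2
    have h3 : orderOf (s ^ p) ∣ Nat.card K := Subgroup.orderOf_dvd_natCard K hspK
    rcases Nat.eq_zero_or_pos j with rfl | hjpos
    · rw [pow_zero] at hj
      exact orderOf_eq_one_iff.mp hj
    · exact absurd (dvd_trans (hj ▸ dvd_pow_self p hjpos.ne') h3) hK
  have hsne : s ≠ 1 := by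
    rintro rfl
    rw [map_one] at hπs
    rw [← hπs, orderOf_one] at hx
    exact hp.ne_one hx.symm
  exact ⟨s, hS₀H hsS₀, hπs, orderOf_eq_prime hsp1 hsne⟩


lemma map_cj {N : Type*} [Group N] (f : G →* N) (g : G) (A : Subgroup G) :
    (cj g A).map f = cj (f g) (A.map f) := by
  show (A.map (MulAut.conj g).toMonoidHom).map f = (A.map f).map (MulAut.conj (f g)).toMonoidHom
  rw [Subgroup.map_map, Subgroup.map_map]
  congr 1
  ext a
  simp

lemma map_subtype_cj {A : Subgroup G} (a : ↥A) (S : Subgroup ↥A) :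
    (cj a S).map A.subtype = cj (a : G) (S.map A.subtype) := by
  rw [map_cj]
  rfl

/-- Two `p`-elements of `G` of order `p` in the same fiber over an order-`p` element of
`G ⧸ K` (with `p ∤ |K|`) generate conjugate subgroups, by an element of the fiber subgroup. -/
lemma sylow_conj_in_fiber [Finite G] (hp : p.Prime) {K : Subgroup G} [hKn : K.Normal]
    (hK : ¬ p ∣ Nat.card K) {x : G ⧸ K} (hx : orderOf x = p) {s s' : G}
    (hs : QuotientGroup.mk' K s = x) (hs' : QuotientGroup.mk' K s' = x)
    (hos : orderOf s = p) (hos' : orderOf s' = p) :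
    ∃ w : G, QuotientGroup.mk' K w ∈ Subgroup.zpowers x ∧
      cj w (Subgroup.zpowers s') = Subgroup.zpowers s := by
  haveI : Fact p.Prime := ⟨hp⟩
  set π := QuotientGroup.mk' K with hπdef
  have hπ : Function.Surjective π := QuotientGroup.mk'_surjective K
  set W := (Subgroup.zpowers x).comap π with hWdef
  have hKW : K ≤ W := by
    intro k hk
    have h1 : π k = 1 := (QuotientGroup.eq_one_iff k).mpr hk
    rw [hWdef, Subgroup.mem_comap, h1]
    exact Subgroup.one_mem _
  have hsW : s ∈ W := by
    rw [hWdef, Subgroup.mem_comap, hs]; exact Subgroup.mem_zpowers x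
  have hs'W : s' ∈ W := by
    rw [hWdef, Subgroup.mem_comap, hs']; exact Subgroup.mem_zpowers x
  -- compute the cardinality of W
  set B := K.subgroupOf W with hBdef
  set φ := π.comp W.subtype with hφdef
  have hkerφ : φ.ker = B := by
    rw [hφdef, ← MonoidHom.comap_ker, QuotientGroup.ker_mk']
    rfl
  have hrangeφ : φ.range = Subgroup.zpowers x := by
    rw [hφdef, MonoidHom.range_comp, Subgroup.range_subtype,
      Subgroup.map_comap_eq_self_of_surjective hπ]
  have hcardW : Nat.card ↥W = p * Nat.card K := by
    rw [Subgroup.card_eq_card_quotient_mul_card_subgroup B]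
    congr 1
    · rw [← hkerφ]
      have h1 := Nat.card_congr (QuotientGroup.quotientKerEquivRange φ).toEquiv
      rw [h1, hrangeφ, Nat.card_zpowers, hx]
    · rw [hBdef]
      exact Nat.card_congr (Subgroup.subgroupOfEquivOfLe hKW).toEquiv
  have hfact : (Nat.card ↥W).factorization p = 1 := by
    rw [hcardW, Nat.factorization_mul hp.pos.ne' Nat.card_pos.ne']
    simp [hp.factorization, Nat.factorization_eq_zero_of_not_dvd hK]
  -- the two cyclic groups are Sylow subgroups of W
  have hzsW : Subgroup.zpowers s ≤ W := Subgroup.zpowers_le.mpr hsW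
  have hzs'W : Subgroup.zpowers s' ≤ W := Subgroup.zpowers_le.mpr hs'W
  have hcard1 : Nat.card ((Subgroup.zpowers s).subgroupOf W) =
      p ^ (Nat.card ↥W).factorization p := by
    rw [hfact, pow_one, Nat.card_congr (Subgroup.subgroupOfEquivOfLe hzsW).toEquiv,
      Nat.card_zpowers, hos]
  have hcard2 : Nat.card ((Subgroup.zpowers s').subgroupOf W) =
      p ^ (Nat.card ↥W).factorization p := by
    rw [hfact, pow_one, Nat.card_congr (Subgroup.subgroupOfEquivOfLe hzs'W).toEquiv,
      Nat.card_zpowers, hos']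
  set P1 : Sylow p ↥W := Sylow.ofCard _ hcard1 with hP1def
  set P2 : Sylow p ↥W := Sylow.ofCard _ hcard2 with hP2def
  obtain ⟨w₀, hw₀⟩ := MulAction.exists_smul_eq ↥W P2 P1
  have hcoe : cj w₀ ((Subgroup.zpowers s').subgroupOf W) =
      (Subgroup.zpowers s).subgroupOf W := by
    have h1 : ((w₀ • P2 : Sylow p ↥W) : Subgroup ↥W) = (P1 : Subgroup ↥W) := by rw [hw₀]
    rw [hP1def, hP2def, Sylow.coe_ofCard] at h1
    rw [← h1]
    rfl
  refine ⟨(w₀ : G), w₀.2, ?_⟩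
  have := congrArg (Subgroup.map W.subtype) hcoe
  rwa [map_subtype_cj, Subgroup.subgroupOf_map_subtype, Subgroup.subgroupOf_map_subtype,
    inf_eq_left.mpr hzsW, inf_eq_left.mpr hzs'W] at this


/-- Quotient by a normal p'-subgroup `K` with `T ⊔ K` not normal: the normalizer of the image
of `T` is strongly p-embedded. -/
lemma quotient_strongly [Finite G] (hp : p.Prime) {T K : Subgroup G} [hKn : K.Normal]
    (hT : IsPGroup p T) (hTbot : T ≠ ⊥) (hH : IsStronglyPEmbedded p (Subgroup.normalizer (T : Set G)))
    (hK : ¬ p ∣ Nat.card K) (hnot : ¬ (T ⊔ K).Normal) :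
    IsStronglyPEmbedded p (Subgroup.normalizer ((T.map (QuotientGroup.mk' K)) : Set (G ⧸ K))) := by
  haveI : Fact p.Prime := ⟨hp⟩
  set π := QuotientGroup.mk' K with hπdef
  have hπ : Function.Surjective π := QuotientGroup.mk'_surjective K
  haveI : Finite (G ⧸ K) := Finite.of_surjective π hπ
  set Tb := T.map π with hTbdef
  set H' := (Subgroup.normalizer (Tb : Set (G ⧸ K))) with hH'def
  have hcomap : H'.comap π = (Subgroup.normalizer ((T ⊔ K : Subgroup G) : Set G)) := by
    rw [hH'def, hTbdef, Subgroup.comap_normalizer_eq_of_surjective _ hπ,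
      Subgroup.comap_map_eq, QuotientGroup.ker_mk']
  have hmapH : ((Subgroup.normalizer (T : Set G))).map π ≤ H' := Subgroup.le_normalizer_map π
  refine ⟨?_, ?_, ?_⟩
  · intro htop
    apply hnot
    rw [← Subgroup.normalizer_eq_top_iff, ← hcomap, htop, Subgroup.comap_top]
  · -- p divides the cardinality of H'
    set φ := π.comp ((Subgroup.normalizer (T : Set G))).subtype with hφdef
    have hkerφ : φ.ker = K.subgroupOf (Subgroup.normalizer (T : Set G)) := by
      rw [hφdef, ← MonoidHom.comap_ker, QuotientGroup.ker_mk']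
      rfl
    have hrangeφ : φ.range = ((Subgroup.normalizer (T : Set G))).map π := by
      rw [hφdef, MonoidHom.range_comp, Subgroup.range_subtype]
    have hcard : Nat.card ↥((Subgroup.normalizer (T : Set G))) =
        Nat.card ↥(((Subgroup.normalizer (T : Set G))).map π) * Nat.card ↥(K.subgroupOf (Subgroup.normalizer (T : Set G))) := by
      rw [Subgroup.card_eq_card_quotient_mul_card_subgroup (K.subgroupOf (Subgroup.normalizer (T : Set G)))]
      congr 1
      rw [← hkerφ, Nat.card_congr (QuotientGroup.quotientKerEquivRange φ).toEquiv, hrangeφ]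
    have hkerdvd : Nat.card ↥(K.subgroupOf (Subgroup.normalizer (T : Set G))) ∣ Nat.card K := by
      have h1 : ((K.subgroupOf (Subgroup.normalizer (T : Set G))).map ((Subgroup.normalizer (T : Set G))).subtype) ≤ K := by
        rw [Subgroup.subgroupOf_map_subtype]
        exact inf_le_left
      have h2 : Nat.card ↥(K.subgroupOf (Subgroup.normalizer (T : Set G))) =
          Nat.card ↥((K.subgroupOf (Subgroup.normalizer (T : Set G))).map ((Subgroup.normalizer (T : Set G))).subtype) :=
        Nat.card_congr (Subgroup.equivMapOfInjective _ _ ((Subgroup.normalizer (T : Set G))).subtype_injective).toEquiv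
      rw [h2]
      exact Subgroup.card_dvd_of_le h1
    have hpnotker : ¬ p ∣ Nat.card ↥(K.subgroupOf (Subgroup.normalizer (T : Set G))) :=
      fun h => hK (h.trans hkerdvd)
    have hpmap : p ∣ Nat.card ↥(((Subgroup.normalizer (T : Set G))).map π) := by
      have := hH.2.1
      rw [hcard] at this
      exact (hp.dvd_mul.mp this).resolve_right hpnotker
    exact hpmap.trans (Subgroup.card_dvd_of_le hmapH)
  · -- the intersection property
    intro g' hg' hdvd
    obtain ⟨xe, hxe⟩ := exists_prime_orderOf_dvd_card' p hdvd
    set x : G ⧸ K := (xe : G ⧸ K) with hxdef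
    have hxord : orderOf x = p := by rw [hxdef, Subgroup.orderOf_coe, hxe]
    have hx1 : x ∈ H' := (inf_le_left : H' ⊓ cj g' H' ≤ H') xe.2
    have hx2 : x ∈ cj g' H' := (inf_le_right : H' ⊓ cj g' H' ≤ cj g' H') xe.2
    obtain ⟨g, rfl⟩ := hπ g'
    have hx2' : x ∈ (Subgroup.normalizer ((cj (π g) Tb) : Set (G ⧸ K))) := by
      rw [cj_normalizer]
      exact hx2
    -- lift x to a p-element s in N_G(T)
    obtain ⟨s, hsH, hπs, hords⟩ := lift_p_elem hp hT hTbot hH hK hxord hx1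
    -- and to a p-element s' in N_G(T^g)
    have hTg : IsPGroup p ↥(cj g T) := hT.map _
    have hTgbot : cj g T ≠ ⊥ := fun h => hTbot (cj_bot_iff.mp h)
    have hHg : IsStronglyPEmbedded p (Subgroup.normalizer ((cj g T) : Set G)) := by
      rw [cj_normalizer]
      exact strongly_conj hH g
    have hmapTg : (cj g T).map π = cj (π g) Tb := by rw [map_cj, hTbdef]
    obtain ⟨s', hs'H, hπs', hords'⟩ := lift_p_elem hp hTg hTgbot hHg hK hxord
      (by rw [hmapTg]; exact hx2')
    -- conjugate the two cyclic subgroups inside the fiber over ⟨x⟩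
    obtain ⟨w, hwZ, hwcj⟩ := sylow_conj_in_fiber hp hK hxord hπs hπs' hords hords'
    -- zpowers s' lies in two conjugates of H
    have hzp : IsPGroup p ↥(Subgroup.zpowers s') :=
      IsPGroup.of_card (by rw [Nat.card_zpowers, hords', pow_one])
    have hzbot : Subgroup.zpowers s' ≠ ⊥ := by
      simp only [Ne, Subgroup.zpowers_eq_bot]
      intro h1
      rw [h1, orderOf_one] at hords'
      exact hp.ne_one hords'.symm
    have h1 : Subgroup.zpowers s' ≤ cj w⁻¹ (Subgroup.normalizer (T : Set G)) := by
      have h0 : cj w (Subgroup.zpowers s') ≤ (Subgroup.normalizer (T : Set G)) := by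
        rw [hwcj]
        exact Subgroup.zpowers_le.mpr hsH
      have := cj_mono w⁻¹ h0
      rwa [cj_cj, inv_mul_cancel, cj_one] at this
    have h2 : Subgroup.zpowers s' ≤ cj g (Subgroup.normalizer (T : Set G)) := by
      rw [← cj_normalizer]
      exact Subgroup.zpowers_le.mpr hs'H
    have hkey : g⁻¹ * w⁻¹ ∈ (Subgroup.normalizer (T : Set G)) := key hp hH hzp hzbot h1 h2
    -- contradiction with g' ∉ H'
    have hmem1 : (π g)⁻¹ * (π w)⁻¹ ∈ H' := by
      apply hmapH
      exact ⟨g⁻¹ * w⁻¹, hkey, by simp⟩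
    have hπw : π w ∈ H' := by
      have : Subgroup.zpowers x ≤ H' := Subgroup.zpowers_le.mpr hx1
      exact this hwZ
    have hmem2 : (π g)⁻¹ ∈ H' := by
      have := H'.mul_mem hmem1 hπw
      simpa [mul_assoc] using this
    exact hg' (by simpa using H'.inv_mem hmem2)


end StmtAux

open StmtAux

/-- **Statement 13.** Let `p` be a prime and `G` a finite group having a strongly
`p`-embedded subgroup.  Let `(K i)` be a finite family of normal subgroups of `G` with
`⋂ K i = 1`, and `J = {i : p ∤ |K i|}`.  Assume there is a `p`-subgroup `T ≤ G` whose
normalizer `N_G(T)` is strongly `p`-embedded in `G`.  Then there is `j ∈ J` such that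
`G/K j` has a strongly `p`-embedded subgroup. -/
theorem stmt_13 (p : ℕ) (hp : p.Prime) (G : Type*) [Group G] [Finite G]
    (hG : ∃ H : Subgroup G, IsStronglyPEmbedded p H)
    (ι : Type*) [Finite ι] (K : ι → Subgroup G) [∀ i, (K i).Normal]
    (hinf : (⨅ i, K i) = ⊥)
    (T : Subgroup G) (hT : IsPGroup p ↥T)
    (hNT : IsStronglyPEmbedded p (Subgroup.normalizer (T : Set G))) :
    ∃ j : ι, ¬ p ∣ Nat.card (K j) ∧
      ∃ H' : Subgroup (G ⧸ K j), IsStronglyPEmbedded p H' := by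
  classical
  haveI : Fact p.Prime := ⟨hp⟩
  have hTbot : T ≠ ⊥ := by
    rintro rfl
    exact hNT.1 (Subgroup.normalizer_eq_top_iff.mpr inferInstance)
  have hex : ∃ j, ¬ (T ⊔ K j).Normal := by
    by_contra hall
    push_neg at hall
    set N := ⨅ i, (T ⊔ K i) with hNdef
    have hTN : T ≤ N := le_iInf fun i => le_sup_left
    have hNnormal : N.Normal := by
      constructor
      intro n hn g
      rw [hNdef, Subgroup.mem_iInf] at hn ⊢
      intro i
      exact (hall i).conj_mem n (hn i) g
    obtain ⟨nT, hnT⟩ := IsPGroup.iff_card.mp hT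
    have hNp : IsPGroup p N := by
      intro y
      refine ⟨nT, ?_⟩
      have hy1 : (y : G) ^ (p ^ nT) = 1 := by
        have hmem : ∀ i, (y : G) ^ (p ^ nT) ∈ K i := by
          intro i
          set πi := QuotientGroup.mk' (K i) with hπidef
          have hπiK : (K i).map πi = ⊥ := by
            rw [Subgroup.map_eq_bot_iff, hπidef, QuotientGroup.ker_mk']
          have hyi : πi y ∈ T.map πi := by
            have h1 : (y : G) ∈ T ⊔ K i := (iInf_le _ i : N ≤ T ⊔ K i) y.2
            have h2 : πi y ∈ (T ⊔ K i).map πi := Subgroup.mem_map_of_mem _ h1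
            rwa [Subgroup.map_sup, hπiK, sup_bot_eq] at h2
          have hdvd : orderOf (πi (y : G)) ∣ p ^ nT := by
            have d1 : orderOf (πi (y : G)) ∣ Nat.card ↥(T.map πi) :=
              Subgroup.orderOf_dvd_natCard _ hyi
            have d2 : Nat.card ↥(T.map πi) ∣ Nat.card T := by
              have e1 : T.map πi = (πi.comp T.subtype).range := by
                rw [MonoidHom.range_comp, Subgroup.range_subtype]
              rw [e1, ← Nat.card_congr
                (QuotientGroup.quotientKerEquivRange (πi.comp T.subtype)).toEquiv]
              exact Subgroup.card_quotient_dvd_card _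
            exact (d1.trans d2).trans (dvd_of_eq hnT)
          have hpow : (πi ((y : G) ^ (p ^ nT))) = 1 := by
            rw [map_pow]
            exact orderOf_dvd_iff_pow_eq_one.mp hdvd
          exact (QuotientGroup.eq_one_iff _).mp hpow
        have : (y : G) ^ (p ^ nT) ∈ (⨅ i, K i) := Subgroup.mem_iInf.mpr hmem
        rw [hinf] at this
        exact this
      exact Subtype.ext (by simpa using hy1)
    have hNbot : N ≠ ⊥ := fun h => hTbot (le_bot_iff.mp (h ▸ hTN))
    have hNH : N ≤ (Subgroup.normalizer (T : Set G)) := grow hp hNT hNp hTN Subgroup.le_normalizer hTbot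
    have hfin : (Subgroup.normalizer (N : Set G)) ≤ (Subgroup.normalizer (T : Set G)) := normalizer_le hp hNT hNp hNbot hNH
    rw [Subgroup.normalizer_eq_top_iff.mpr hNnormal] at hfin
    exact hNT.1 (top_le_iff.mp hfin)
  obtain ⟨j, hj⟩ := hex
  have hpK : ¬ p ∣ Nat.card (K j) := fun hdvd => hj (sup_normal_of_dvd hp hT hTbot hNT hdvd)
  exact ⟨j, hpK, _, quotient_strongly hp hT hTbot hNT hpK hj⟩
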